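/- Let n ≥ 1 and let S be a finite set with at least two elements. Let T ⊆ C_S(ℝⁿ) be the set of injective x : S → ℝⁿ with Σ_{s∈S} x(s) = 0 and Σ_{s∈S} ‖x(s)‖² = 1. Equip C_S(ℝⁿ) with the equivalence relation x ∼ y iff there exist a real λ > 0 and b ∈ ℝⁿ with y(s) = λ·x(s) + b for all s ∈ S (the orbit relation of the diagonal Dil_n-action), and give the quotient C_S(ℝⁿ)/Dil_n the quotient topology. Then the composite T ↪ C_S(ℝⁿ) → C_S(ℝⁿ)/Dil_n is a homeomorphism; in particular every Dil_n-orbit in C_S(ℝⁿ) meets T in exactly one point. -/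

import Mathlib

/-- The configuration space `C_S(ℝⁿ)` of ordered pairwise distinct points of
`ℝⁿ` labeled by `S`, i.e. injective maps `S → ℝⁿ`, with the subspace topology. -/
def ConfigSpace (n : ℕ) (S : Type*) : Type _ :=
  {x : S → EuclideanSpace ℝ (Fin n) // Function.Injective x}

noncomputable instance (n : ℕ) (S : Type*) : TopologicalSpace (ConfigSpace n S) :=
  instTopologicalSpaceSubtype

/-- The orbit equivalence relation of the diagonal `Dil_n`-action on `C_S(ℝⁿ)`:
`x ∼ y` iff `y = λ • x + b` pointwise for some `λ > 0` and `b ∈ ℝⁿ`. -/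
def dilOrbitRel (n : ℕ) (S : Type*) (x y : ConfigSpace n S) : Prop :=
  ∃ lam : ℝ, 0 < lam ∧ ∃ b : EuclideanSpace ℝ (Fin n),
    ∀ s : S, y.1 s = lam • x.1 s + b

/-- The set `T` of normalized configurations: barycenter at the origin and
sum of squared norms equal to `1`. -/
def normalizedConfigs (n : ℕ) (S : Type*) [Fintype S] : Set (ConfigSpace n S) :=
  {x | (∑ s : S, x.1 s) = 0 ∧ (∑ s : S, ‖x.1 s‖ ^ 2) = (1 : ℝ)}

namespace NormCfgAux

variable {n : ℕ} {S : Type} [Fintype S]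

/-- the barycenter -/
noncomputable def ctr (x : S → EuclideanSpace ℝ (Fin n)) : EuclideanSpace ℝ (Fin n) :=
  (Fintype.card S : ℝ)⁻¹ • ∑ u, x u

/-- sum of squared distances from the barycenter -/
noncomputable def q (x : S → EuclideanSpace ℝ (Fin n)) : ℝ :=
  ∑ s, ‖x s - ctr x‖ ^ 2

/-- the normalization map -/
noncomputable def nm (x : S → EuclideanSpace ℝ (Fin n)) : S → EuclideanSpace ℝ (Fin n) :=
  fun s => (Real.sqrt (q x))⁻¹ • (x s - ctr x)

lemma card_ne (hS : 2 ≤ Fintype.card S) : (Fintype.card S : ℝ) ≠ 0 := by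
  have : 0 < Fintype.card S := lt_of_lt_of_le (by norm_num) hS
  exact_mod_cast this.ne'

lemma sum_sub_ctr (hS : 2 ≤ Fintype.card S) (x : S → EuclideanSpace ℝ (Fin n)) :
    (∑ s, (x s - ctr x)) = 0 := by
  rw [Finset.sum_sub_distrib, Finset.sum_const, Finset.card_univ, sub_eq_zero,
    ← Nat.cast_smul_eq_nsmul ℝ, ctr, smul_inv_smul₀ (card_ne hS)]

lemma q_pos (hS : 2 ≤ Fintype.card S) {x : S → EuclideanSpace ℝ (Fin n)}
    (hx : Function.Injective x) : 0 < q x := by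
  obtain ⟨a, b, hab⟩ := Fintype.one_lt_card_iff.mp (lt_of_lt_of_le one_lt_two hS)
  have key : x a - ctr x ≠ 0 ∨ x b - ctr x ≠ 0 := by
    by_contra h
    push_neg at h
    exact hab (hx ((sub_eq_zero.mp h.1).trans (sub_eq_zero.mp h.2).symm))
  apply Finset.sum_pos'
  · intro i _; positivity
  · rcases key with hk | hk
    · exact ⟨a, Finset.mem_univ a, pow_pos (norm_pos_iff.mpr hk) 2⟩
    · exact ⟨b, Finset.mem_univ b, pow_pos (norm_pos_iff.mpr hk) 2⟩

lemma sqrt_q_pos (hS : 2 ≤ Fintype.card S) {x : S → EuclideanSpace ℝ (Fin n)}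
    (hx : Function.Injective x) : 0 < Real.sqrt (q x) :=
  Real.sqrt_pos.mpr (q_pos hS hx)

/-- the normalized configuration has barycenter zero -/
lemma nm_sum (hS : 2 ≤ Fintype.card S) (x : S → EuclideanSpace ℝ (Fin n)) :
    (∑ s, nm x s) = 0 := by
  simp only [nm, ← Finset.smul_sum, sum_sub_ctr hS x, smul_zero]

/-- the normalized configuration has total square norm one -/
lemma nm_sq (hS : 2 ≤ Fintype.card S) {x : S → EuclideanSpace ℝ (Fin n)}
    (hx : Function.Injective x) : (∑ s, ‖nm x s‖ ^ 2) = 1 := by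
  have hq := q_pos hS hx
  have hN := sqrt_q_pos hS hx
  have : ∀ s : S, ‖nm x s‖ ^ 2 = (Real.sqrt (q x))⁻¹ ^ 2 * ‖x s - ctr x‖ ^ 2 := by
    intro s
    rw [nm, norm_smul, mul_pow, Real.norm_eq_abs, abs_of_pos (inv_pos.mpr hN)]
  rw [Finset.sum_congr rfl fun s _ => this s, ← Finset.mul_sum]
  rw [show (∑ s, ‖x s - ctr x‖ ^ 2) = q x from rfl]
  rw [inv_pow, Real.sq_sqrt hq.le, inv_mul_cancel₀ hq.ne']

lemma nm_inj (hS : 2 ≤ Fintype.card S) {x : S → EuclideanSpace ℝ (Fin n)}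
    (hx : Function.Injective x) : Function.Injective (nm x) := by
  intro s t h
  have hN := sqrt_q_pos hS hx
  apply hx
  have := smul_right_injective (EuclideanSpace ℝ (Fin n))
    (inv_ne_zero hN.ne') h
  exact sub_left_injective this

/-- `x` is in the dil-orbit relation with its normalization -/
lemma rel_nm (hS : 2 ≤ Fintype.card S) (x : ConfigSpace n S)
    (hinj : Function.Injective (nm x.1)) :
    dilOrbitRel n S x ⟨nm x.1, hinj⟩ := by
  refine ⟨(Real.sqrt (q x.1))⁻¹, inv_pos.mpr (sqrt_q_pos hS x.2),
    -((Real.sqrt (q x.1))⁻¹ • ctr x.1), fun s => ?_⟩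
  show nm x.1 s = _
  rw [nm, smul_sub, sub_eq_add_neg]

/-- the normalization map is invariant under the dil-orbit relation -/
lemma nm_invariant (hS : 2 ≤ Fintype.card S) {x y : ConfigSpace n S}
    (h : dilOrbitRel n S x y) : nm x.1 = nm y.1 := by
  obtain ⟨lam, hlam, b, hb⟩ := h
  have hctr : ctr y.1 = lam • ctr x.1 + b := by
    simp only [ctr, Finset.sum_congr rfl fun s _ => hb s, Finset.sum_add_distrib,
      ← Finset.smul_sum, Finset.sum_const, Finset.card_univ, smul_add,
      ← Nat.cast_smul_eq_nsmul ℝ, inv_smul_smul₀ (card_ne hS)]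
    rw [smul_comm]
  have hsub : ∀ s : S, y.1 s - ctr y.1 = lam • (x.1 s - ctr x.1) := by
    intro s
    rw [hb s, hctr, smul_sub]
    abel
  have hq : q y.1 = lam ^ 2 * q x.1 := by
    simp only [q, hsub, norm_smul, mul_pow, Real.norm_eq_abs, abs_of_pos hlam,
      ← Finset.mul_sum]
  have hNy : Real.sqrt (q y.1) = lam * Real.sqrt (q x.1) := by
    rw [hq, Real.sqrt_mul (by positivity), Real.sqrt_sq hlam.le]
  funext s
  rw [nm, nm, hsub s, hNy, mul_inv, smul_smul]
  rw [mul_comm lam⁻¹, mul_assoc, inv_mul_cancel₀ hlam.ne', mul_one]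

/-- the normalization map fixes normalized configurations -/
lemma nm_fixed {x : S → EuclideanSpace ℝ (Fin n)} (h0 : (∑ s, x s) = 0)
    (h1 : (∑ s, ‖x s‖ ^ 2) = 1) : nm x = x := by
  have hctr : ctr x = 0 := by rw [ctr, h0, smul_zero]
  have hq : q x = 1 := by simp only [q, hctr, sub_zero, h1]
  funext s
  rw [nm, hctr, hq, Real.sqrt_one, inv_one, one_smul, sub_zero]

/-- the dil-orbit relation is an equivalence relation -/
lemma rel_equiv : Equivalence (dilOrbitRel n S) := by
  constructor
  · intro x
    exact ⟨1, one_pos, 0, fun s => by simp⟩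
  · rintro x y ⟨lam, hlam, b, hb⟩
    refine ⟨lam⁻¹, inv_pos.mpr hlam, -(lam⁻¹ • b), fun s => ?_⟩
    rw [hb s, smul_add, smul_smul, inv_mul_cancel₀ hlam.ne', one_smul]
    abel
  · rintro x y z ⟨lam, hlam, b, hb⟩ ⟨mu, hmu, c, hc⟩
    refine ⟨mu * lam, mul_pos hmu hlam, mu • b + c, fun s => ?_⟩
    rw [hc s, hb s, smul_add, smul_smul]
    abel

end NormCfgAux

open NormCfgAux in
theorem normalizedConfigs_homeomorph_quotient
    (n : ℕ) (hn : 1 ≤ n) (S : Type) [Fintype S] (hS : 2 ≤ Fintype.card S) :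
    IsHomeomorph (fun t : normalizedConfigs n S => Quot.mk (dilOrbitRel n S) t.1) ∧
    (∀ x : ConfigSpace n S, ∃! t : normalizedConfigs n S, dilOrbitRel n S x t.1) := by
  -- the normalization map into `T`
  let r : ConfigSpace n S → normalizedConfigs n S := fun x =>
    ⟨⟨nm x.1, nm_inj hS x.2⟩, nm_sum hS x.1, nm_sq hS x.2⟩
  have hrel : ∀ x : ConfigSpace n S, dilOrbitRel n S x (r x).1 :=
    fun x => rel_nm hS x (nm_inj hS x.2)
  have hr_inv : ∀ x y : ConfigSpace n S, dilOrbitRel n S x y → r x = r y := by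
    intro x y h
    apply Subtype.ext; apply Subtype.ext
    exact nm_invariant hS h
  have hr_fix : ∀ t : normalizedConfigs n S, r t.1 = t := by
    intro t
    apply Subtype.ext; apply Subtype.ext
    exact nm_fixed t.2.1 t.2.2
  -- uniqueness statement
  have huniq : ∀ x : ConfigSpace n S, ∃! t : normalizedConfigs n S, dilOrbitRel n S x t.1 := by
    intro x
    refine ⟨r x, hrel x, fun t ht => ?_⟩
    rw [← hr_fix t, ← hr_inv x t.1 ht]
  refine ⟨?_, huniq⟩
  -- the homeomorphism
  rw [isHomeomorph_iff_exists_inverse]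
  have hrcont : Continuous r := by
    have hval : Continuous (fun x : ConfigSpace n S => x.1) := continuous_subtype_val
    have hcoord : ∀ s : S, Continuous (fun x : ConfigSpace n S => x.1 s) :=
      fun s => (continuous_apply s).comp hval
    have hctr : Continuous (fun x : ConfigSpace n S => ctr x.1) := by
      exact (continuous_finset_sum _ fun s _ => hcoord s).const_smul ((Fintype.card S : ℝ)⁻¹)
    have hsub : ∀ s : S, Continuous (fun x : ConfigSpace n S => x.1 s - ctr x.1) :=
      fun s => (hcoord s).sub hctr
    have hq : Continuous (fun x : ConfigSpace n S => q x.1) :=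
      continuous_finset_sum _ fun s _ => ((hsub s).norm.pow 2)
    have hNinv : Continuous (fun x : ConfigSpace n S => (Real.sqrt (q x.1))⁻¹) :=
      (Real.continuous_sqrt.comp hq).inv₀ fun x => (sqrt_q_pos hS x.2).ne'
    have hnm : Continuous (fun x : ConfigSpace n S => nm x.1) := by
      apply continuous_pi
      intro s
      exact hNinv.smul (hsub s)
    exact (hnm.subtype_mk _).subtype_mk _
  refine ⟨continuous_quot_mk.comp continuous_subtype_val,
    Quot.lift r hr_inv, fun t => ?_, fun c => ?_, continuous_quot_lift hr_inv hrcont⟩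
  · exact hr_fix t
  · induction c using Quot.ind with
    | _ x => exact Quot.sound ((rel_equiv).symm (hrel x))
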